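/- Every permutation π ∈ I₂ occurs as a pattern in some generic staircase: for every π ∈ I₂ there exist positive integers k and b such that π ≼ the (k,b)-generic staircase. -/

import Mathlib

open Filter

/-- `f` is an embedding (involvement) of the permutation `α` into the permutation `π`:
it is strictly monotone on positions and preserves the relative order of values. -/
def IsEmbedding {m n : ℕ} (α : Equiv.Perm (Fin m)) (π : Equiv.Perm (Fin n))
    (f : Fin m → Fin n) : Prop :=
  StrictMono f ∧ ∀ a b : Fin m, α a < α b ↔ π (f a) < π (f b)

/-- A permutation of arbitrary (finite) length. -/
abbrev PermSig := Σ n : ℕ, Equiv.Perm (Fin n)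

/-- `α ≼ π`: the pattern `α` is involved in `π`. -/
def Involves (α π : PermSig) : Prop := ∃ f, IsEmbedding α.2 π.2 f

/-- The class of permutations avoiding every pattern in `X`. -/
def AvClass (X : Set PermSig) : Set PermSig := {π | ∀ α ∈ X, ¬ Involves α π}

/-- A pattern class: a set of permutations closed downward under involvement. -/
def IsPatternClass (C : Set PermSig) : Prop :=
  ∀ α π : PermSig, Involves α π → π ∈ C → α ∈ C

/-- The number of permutations of length `n` in `C`. -/
noncomputable def classCount (C : Set PermSig) (n : ℕ) : ℕ :=
  Nat.card {π : Equiv.Perm (Fin n) // (⟨n, π⟩ : PermSig) ∈ C}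

/-- The (upper) growth rate `s(C) = limsup |C ∩ S_n|^{1/n}`, valued in `ℝ≥0∞`. -/
noncomputable def growthRate (C : Set PermSig) : ENNReal :=
  Filter.atTop.limsup fun n : ℕ => (classCount C n : ENNReal) ^ (1 / (n : ℝ))

/-- `π` contains a decreasing subsequence of length `k`. -/
def HasDecSeq {n : ℕ} (π : Equiv.Perm (Fin n)) (k : ℕ) : Prop :=
  ∃ q : Fin k → Fin n, StrictMono q ∧ StrictAnti fun i => π (q i)

/-- The class `I_k = Av(δ_{k+1})` of permutations with no decreasing
subsequence of length `k+1`. -/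
def IkClass (k : ℕ) : Set PermSig := {π | ¬ HasDecSeq π.2 (k + 1)}

/-- `f` and `g` witness `π` as a merge of `α` and `β`: both are embeddings and
their ranges partition the points of `π`. -/
def IsMergeVia {a b n : ℕ} (α : Equiv.Perm (Fin a)) (β : Equiv.Perm (Fin b))
    (π : Equiv.Perm (Fin n)) (f : Fin a → Fin n) (g : Fin b → Fin n) : Prop :=
  IsEmbedding α π f ∧ IsEmbedding β π g ∧ ∀ x : Fin n, (∃ i, f i = x) ↔ ¬∃ j, g j = x

/-- The merge `M(C, D)` of two sets of permutations. -/
def MergeClass (C D : Set PermSig) : Set PermSig :=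
  {π | ∃ α ∈ C, ∃ β ∈ D, ∃ f g, IsMergeVia α.2 β.2 π.2 f g}

/-- Number of indices `c` with `c+1 < n` such that exactly one of the points
`c`, `c+1` lies in `S`. -/
noncomputable def posChanges {n : ℕ} (S : Set (Fin n)) : ℕ :=
  Set.ncard {c : Fin n | ∃ h : (c : ℕ) + 1 < n, ¬ (c ∈ S ↔ (⟨(c : ℕ) + 1, h⟩ : Fin n) ∈ S)}

/-- Total number of type changes, by position and by value, of the merge of `π`
whose first part occupies the set of positions `S`. -/
noncomputable def typeChanges {n : ℕ} (π : Equiv.Perm (Fin n)) (S : Set (Fin n)) : ℕ :=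
  posChanges S + posChanges ((fun x => π x) '' S)

/-- The `B`-bounded merge `M_B(C, D)`: merges of a member of `C` with a member of
`D` having at most `B` type changes in total, by position or by value. -/
def BMergeClass (B : ℕ) (C D : Set PermSig) : Set PermSig :=
  {π | ∃ α ∈ C, ∃ β ∈ D, ∃ f g, IsMergeVia α.2 β.2 π.2 f g ∧
    typeChanges π.2 (Set.range f) ≤ B}

/-- The direct sum of two permutations. -/
def dsum {a b : ℕ} (α : Equiv.Perm (Fin a)) (β : Equiv.Perm (Fin b)) :
    Equiv.Perm (Fin (a + b)) :=
  finSumFinEquiv.symm.trans ((Equiv.sumCongr α β).trans finSumFinEquiv)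

/-- The direct sum `α ⊕ β` of two permutations of arbitrary lengths. -/
def DSum (α β : PermSig) : PermSig := ⟨α.1 + β.1, dsum α.2 β.2⟩

/-- The increasing permutation `ι_m` of length `m`. -/
def iotaSig (m : ℕ) : PermSig := ⟨m, 1⟩

/-- The direct sum of a list of permutations. -/
def DSumList (l : List PermSig) : PermSig := l.foldr DSum (iotaSig 0)

/-- A (nonempty) permutation that is not the direct sum of two nonempty permutations. -/
def PlusIndec (ρ : PermSig) : Prop :=
  ρ.1 ≠ 0 ∧ ∀ α β : PermSig, α.1 ≠ 0 → β.1 ≠ 0 → ρ ≠ DSum α β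

/-- `ρ = red(π)`: writing `π = ι_{m₀} ⊕ ρ₁ ⊕ ι_{m₁} ⊕ ⋯ ⊕ ρ_c ⊕ ι_{m_c}` with each
`ρ_i` plus indecomposable of length at least 2, the rigid reduction of `π` is
`ρ = ρ₁ ⊕ ⋯ ⊕ ρ_c`. -/
def IsRigidReductionOf (ρ π : PermSig) : Prop :=
  ∃ (m₀ : ℕ) (pairs : List (PermSig × ℕ)),
    (∀ p ∈ pairs, PlusIndec p.1 ∧ 2 ≤ p.1.1) ∧
    π = DSum (iotaSig m₀) (DSumList (pairs.map fun p => DSum p.1 (iotaSig p.2))) ∧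
    ρ = DSumList (pairs.map Prod.fst)


/-- `σ` is the `(k,b)`-generic staircase: it has a staircase decomposition into
blocks `P 0, …, P (k-1)`, each increasing of size `b` (listed in order of position
and of value), where each even-to-odd consecutive pair of blocks is arranged left
to right with interleaved values, each odd-to-even consecutive pair is arranged
bottom to top with interleaved positions, and non-consecutive blocks are totally
separated (later blocks entirely above and to the right). -/
def IsGenericStaircase (k b : ℕ) (σ : PermSig) : Prop :=
  ∃ P : Fin k → Fin b → Fin σ.1,
    (Function.Bijective fun p : Fin k × Fin b => P p.1 p.2) ∧
    (∀ i, StrictMono (P i)) ∧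
    (∀ i, StrictMono fun t => σ.2 (P i t)) ∧
    (∀ i j : Fin k, (j : ℕ) = (i : ℕ) + 1 → (i : ℕ) % 2 = 0 →
      (∀ s t, P i s < P j t) ∧
      (∀ t : Fin b, σ.2 (P j t) < σ.2 (P i t)) ∧
      (∀ s t : Fin b, (s : ℕ) + 1 = (t : ℕ) → σ.2 (P i s) < σ.2 (P j t))) ∧
    (∀ i j : Fin k, (j : ℕ) = (i : ℕ) + 1 → (i : ℕ) % 2 = 1 →
      (∀ s t, σ.2 (P i s) < σ.2 (P j t)) ∧
      (∀ t : Fin b, P i t < P j t) ∧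
      (∀ s t : Fin b, (t : ℕ) + 1 = (s : ℕ) → P j t < P i s)) ∧
    (∀ i j : Fin k, (i : ℕ) + 2 ≤ (j : ℕ) →
      ∀ s t, P i s < P j t ∧ σ.2 (P i s) < σ.2 (P j t))


/-! ### Arithmetic helpers -/

private lemma sepa {b a a' u u' : ℕ} (h : a + 1 ≤ a') (hu : u < b) :
    a * b + u < a' * b + u' := by
  have h2 : a * b + u < (a + 1) * b := by
    rw [add_one_mul]; exact Nat.add_lt_add_left hu _
  exact lt_of_lt_of_le h2 (le_trans (Nat.mul_le_mul_right _ h) (Nat.le_add_right _ _))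

private lemma sepb {b a a' u u' : ℕ} (h : a + 2 ≤ a') (hu : u < 2 * b) :
    a * b + u < a' * b + u' := by
  have h2 : a * b + u < (a + 2) * b := by
    rw [show (a + 2) * b = a * b + 2 * b by ring]; exact Nat.add_lt_add_left hu _
  exact lt_of_lt_of_le h2 (le_trans (Nat.mul_le_mul_right _ h) (Nat.le_add_right _ _))

/-! ### The generic staircase permutation -/

/-- position rank of the `t`-th point of block `i` in the generic staircase. -/
def posN (b i t : ℕ) : ℕ :=
  if i = 0 then t else if i % 2 = 1 then i * b + 2 * t else (i - 1) * b + 2 * t + 1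

/-- value rank of the `t`-th point of block `i` in the `(k,b)` generic staircase. -/
def valN (k b i t : ℕ) : ℕ :=
  if i % 2 = 1 then (i - 1) * b + 2 * t else if i + 1 < k then i * b + 2 * t + 1 else i * b + t

lemma posN_zero (b t : ℕ) : posN b 0 t = 0 * b + t := by simp [posN]

lemma posN_odd (b c t : ℕ) : posN b (2 * c + 1) t = (2 * c + 1) * b + 2 * t := by
  have h1 : ¬(2 * c + 1 = 0) := by omega
  have h2 : (2 * c + 1) % 2 = 1 := by omega
  simp [posN, h1, h2]

lemma posN_even (b c t : ℕ) : posN b (2 * c + 2) t = (2 * c + 1) * b + (2 * t + 1) := by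
  have h1 : ¬(2 * c + 2 = 0) := by omega
  have h2 : ¬((2 * c + 2) % 2 = 1) := by omega
  have h3 : 2 * c + 2 - 1 = 2 * c + 1 := by omega
  simp [posN, h1, h2, h3, add_assoc]

lemma valN_odd (k b c t : ℕ) : valN k b (2 * c + 1) t = (2 * c) * b + 2 * t := by
  have h2 : (2 * c + 1) % 2 = 1 := by omega
  have h3 : 2 * c + 1 - 1 = 2 * c := by omega
  simp [valN, h2, h3]

lemma valN_even (k b c t : ℕ) (h : 2 * c + 1 < k) :
    valN k b (2 * c) t = (2 * c) * b + (2 * t + 1) := by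
  have h2 : ¬((2 * c) % 2 = 1) := by omega
  simp [valN, h2, h, add_assoc]

lemma valN_top (k b c t : ℕ) (h : ¬(2 * c + 1 < k)) :
    valN k b (2 * c) t = (2 * c) * b + t := by
  have h2 : ¬((2 * c) % 2 = 1) := by omega
  simp [valN, h2, h]

/-- canonical decomposition of a block index -/
lemma block_cases (i : ℕ) : i = 0 ∨ (∃ c, i = 2 * c + 1) ∨ ∃ c, i = 2 * c + 2 := by
  rcases Nat.even_or_odd i with ⟨c, hc⟩ | ⟨c, hc⟩
  · rcases Nat.eq_zero_or_pos c with h | h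
    · left; omega
    · right; right; exact ⟨c - 1, by omega⟩
  · right; left; exact ⟨c, hc⟩

lemma posN_lt (K b : ℕ) {i t : ℕ} (hi : i < 2 * K + 1) (ht : t < b) :
    posN b i t < (2 * K + 1) * b := by
  rcases block_cases i with rfl | ⟨c, rfl⟩ | ⟨c, rfl⟩
  · rw [posN_zero]
    have h := sepa (b := b) (a := 0) (a' := 2 * K + 1) (u := t) (u' := 0) (by omega) ht
    linarith
  · rw [posN_odd]
    have h6 : (2 * c + 1) * b + 2 * b = (2 * c + 3) * b := by ring
    have h5 : (2 * c + 3) * b ≤ (2 * K + 1) * b :=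
      Nat.mul_le_mul_right _ (by omega)
    linarith
  · rw [posN_even]
    have h6 : (2 * c + 1) * b + 2 * b = (2 * c + 3) * b := by ring
    have h5 : (2 * c + 3) * b ≤ (2 * K + 1) * b :=
      Nat.mul_le_mul_right _ (by omega)
    linarith

lemma valN_lt (K b : ℕ) {i t : ℕ} (hi : i < 2 * K + 1) (ht : t < b) :
    valN (2 * K + 1) b i t < (2 * K + 1) * b := by
  rcases block_cases i with rfl | ⟨c, rfl⟩ | ⟨c, rfl⟩
  · rcases Nat.lt_or_ge (0 + 1) (2 * K + 1) with h | h
    · rw [show (0:ℕ) = 2 * 0 by ring, valN_even _ _ _ _ (by omega)]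
      have h6 : (2 * 0) * b + 2 * b = 2 * b := by ring
      have h5 : 2 * b ≤ (2 * K + 1) * b := Nat.mul_le_mul_right _ (by omega)
      linarith
    · -- K = 0, top block 0
      rw [show (0:ℕ) = 2 * 0 by ring, valN_top _ _ _ _ (by omega)]
      have h := sepa (b := b) (a := 0) (a' := 2 * K + 1) (u := t) (u' := 0) (by omega) ht
      have h2 : (2 * (0:ℕ)) * b + t = 0 * b + t := by ring
      linarith
  · rw [valN_odd]
    have h6 : (2 * c) * b + 2 * b = (2 * c + 2) * b := by ring
    have h5 : (2 * c + 2) * b ≤ (2 * K + 1) * b := Nat.mul_le_mul_right _ (by omega)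
    linarith
  · rw [show 2 * c + 2 = 2 * (c + 1) by ring]
    rcases Nat.lt_or_ge (2 * (c + 1) + 1) (2 * K + 1) with h | h
    · rw [valN_even _ _ _ _ h]
      have h6 : (2 * (c + 1)) * b + 2 * b = (2 * (c + 1) + 2) * b := by ring
      have h5 : (2 * (c + 1) + 2) * b ≤ (2 * K + 1) * b := Nat.mul_le_mul_right _ (by omega)
      linarith
    · rw [valN_top _ _ _ _ (by omega)]
      have h6 : (2 * (c + 1)) * b + b = (2 * (c + 1) + 1) * b := by ring
      have h5 : (2 * (c + 1) + 1) * b ≤ (2 * K + 1) * b := Nat.mul_le_mul_right _ (by omega)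
      linarith


lemma block_cases2 (i : ℕ) : (∃ c, i = 2 * c) ∨ ∃ c, i = 2 * c + 1 := by
  rcases Nat.even_or_odd i with ⟨c, hc⟩ | ⟨c, hc⟩
  · exact Or.inl ⟨c, by omega⟩
  · exact Or.inr ⟨c, by omega⟩

lemma posN_inj (K b : ℕ) {i t i' t' : ℕ} (hi : i < 2 * K + 1) (hi' : i' < 2 * K + 1)
    (ht : t < b) (ht' : t' < b) (h : posN b i t = posN b i' t') : i = i' ∧ t = t' := by
  have h2b : 2 * t < 2 * b := by omega
  have h2b' : 2 * t' < 2 * b := by omega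
  rcases block_cases i with rfl | ⟨c, rfl⟩ | ⟨c, rfl⟩ <;>
    rcases block_cases i' with rfl | ⟨c', rfl⟩ | ⟨c', rfl⟩
  · rw [posN_zero, posN_zero] at h; constructor <;> omega
  · rw [posN_zero, posN_odd] at h
    exact absurd h (ne_of_lt (sepa (by omega) ht))
  · rw [posN_zero, posN_even] at h
    exact absurd h (ne_of_lt (sepa (by omega) ht))
  · rw [posN_zero, posN_odd] at h
    exact absurd h.symm (ne_of_lt (sepa (by omega) ht'))
  · rw [posN_odd, posN_odd] at h
    rcases lt_trichotomy c c' with hc | rfl | hc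
    · exact absurd h (ne_of_lt (sepb (by omega) h2b))
    · have := Nat.add_left_cancel h; constructor <;> omega
    · exact absurd h.symm (ne_of_lt (sepb (by omega) h2b'))
  · rw [posN_odd, posN_even] at h
    rcases lt_trichotomy c c' with hc | rfl | hc
    · exact absurd h (ne_of_lt (sepb (by omega) h2b))
    · have := Nat.add_left_cancel h; omega
    · exact absurd h.symm (ne_of_lt (sepb (by omega) (by omega)))
  · rw [posN_zero, posN_even] at h
    exact absurd h.symm (ne_of_lt (sepa (by omega) ht'))
  · rw [posN_even, posN_odd] at h
    rcases lt_trichotomy c c' with hc | rfl | hc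
    · exact absurd h (ne_of_lt (sepb (by omega) (by omega)))
    · have := Nat.add_left_cancel h; omega
    · exact absurd h.symm (ne_of_lt (sepb (by omega) h2b'))
  · rw [posN_even, posN_even] at h
    rcases lt_trichotomy c c' with hc | rfl | hc
    · exact absurd h (ne_of_lt (sepb (by omega) (by omega)))
    · have := Nat.add_left_cancel h; constructor <;> omega
    · exact absurd h.symm (ne_of_lt (sepb (by omega) (by omega)))

lemma valN_inj (K b : ℕ) {i t i' t' : ℕ} (hi : i < 2 * K + 1) (hi' : i' < 2 * K + 1)
    (ht : t < b) (ht' : t' < b) (h : valN (2 * K + 1) b i t = valN (2 * K + 1) b i' t') :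
    i = i' ∧ t = t' := by
  have h2b : 2 * t < 2 * b := by omega
  have h2b' : 2 * t' < 2 * b := by omega
  rcases block_cases2 i with ⟨c, rfl⟩ | ⟨c, rfl⟩ <;>
    rcases block_cases2 i' with ⟨c', rfl⟩ | ⟨c', rfl⟩
  · by_cases hc : 2 * c + 1 < 2 * K + 1 <;> by_cases hc' : 2 * c' + 1 < 2 * K + 1
    · rw [valN_even _ _ _ _ hc, valN_even _ _ _ _ hc'] at h
      rcases lt_trichotomy c c' with h1 | rfl | h1
      · exact absurd h (ne_of_lt (sepb (by omega) (by omega)))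
      · have := Nat.add_left_cancel h; constructor <;> omega
      · exact absurd h.symm (ne_of_lt (sepb (by omega) (by omega)))
    · rw [valN_even _ _ _ _ hc, valN_top _ _ _ _ hc'] at h
      exact absurd h (ne_of_lt (sepb (by omega) (by omega)))
    · rw [valN_top _ _ _ _ hc, valN_even _ _ _ _ hc'] at h
      exact absurd h.symm (ne_of_lt (sepb (by omega) (by omega)))
    · rw [valN_top _ _ _ _ hc, valN_top _ _ _ _ hc'] at h
      have hcc : c = c' := by omega
      subst hcc
      have := Nat.add_left_cancel h; constructor <;> omega
  · by_cases hc : 2 * c + 1 < 2 * K + 1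
    · rw [valN_even _ _ _ _ hc, valN_odd] at h
      rcases lt_trichotomy c c' with h1 | rfl | h1
      · exact absurd h (ne_of_lt (sepb (by omega) (by omega)))
      · have := Nat.add_left_cancel h; omega
      · exact absurd h.symm (ne_of_lt (sepb (by omega) h2b'))
    · rw [valN_top _ _ _ _ hc, valN_odd] at h
      exact absurd h.symm (ne_of_lt (sepb (by omega) h2b'))
  · by_cases hc' : 2 * c' + 1 < 2 * K + 1
    · rw [valN_odd, valN_even _ _ _ _ hc'] at h
      rcases lt_trichotomy c c' with h1 | rfl | h1
      · exact absurd h (ne_of_lt (sepb (by omega) h2b))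
      · have := Nat.add_left_cancel h; omega
      · exact absurd h.symm (ne_of_lt (sepb (by omega) (by omega)))
    · rw [valN_odd, valN_top _ _ _ _ hc'] at h
      exact absurd h (ne_of_lt (sepb (by omega) h2b))
  · rw [valN_odd, valN_odd] at h
    rcases lt_trichotomy c c' with h1 | rfl | h1
    · exact absurd h (ne_of_lt (sepb (by omega) h2b))
    · have := Nat.add_left_cancel h; constructor <;> omega
    · exact absurd h.symm (ne_of_lt (sepb (by omega) h2b'))


/-! ### The staircase as a permutation -/

def phiPos (K b : ℕ) (p : Fin (2 * K + 1) × Fin b) : Fin ((2 * K + 1) * b) :=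
  ⟨posN b p.1 p.2, posN_lt K b p.1.2 p.2.2⟩

def phiVal (K b : ℕ) (p : Fin (2 * K + 1) × Fin b) : Fin ((2 * K + 1) * b) :=
  ⟨valN (2 * K + 1) b p.1 p.2, valN_lt K b p.1.2 p.2.2⟩

lemma phiPos_bij (K b : ℕ) : Function.Bijective (phiPos K b) := by
  rw [Fintype.bijective_iff_injective_and_card]
  constructor
  · rintro ⟨i, t⟩ ⟨i', t'⟩ h
    have h' : posN b i t = posN b i' t' := congrArg Fin.val h
    obtain ⟨h1, h2⟩ := posN_inj K b i.2 i'.2 t.2 t'.2 h'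
    simp [Prod.ext_iff, Fin.ext_iff, h1, h2]
  · simp

lemma phiVal_bij (K b : ℕ) : Function.Bijective (phiVal K b) := by
  rw [Fintype.bijective_iff_injective_and_card]
  constructor
  · rintro ⟨i, t⟩ ⟨i', t'⟩ h
    have h' : valN (2 * K + 1) b i t = valN (2 * K + 1) b i' t' := congrArg Fin.val h
    obtain ⟨h1, h2⟩ := valN_inj K b i.2 i'.2 t.2 t'.2 h'
    simp [Prod.ext_iff, Fin.ext_iff, h1, h2]
  · simp

noncomputable def ePos (K b : ℕ) : (Fin (2 * K + 1) × Fin b) ≃ Fin ((2 * K + 1) * b) :=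
  Equiv.ofBijective _ (phiPos_bij K b)

noncomputable def eVal (K b : ℕ) : (Fin (2 * K + 1) × Fin b) ≃ Fin ((2 * K + 1) * b) :=
  Equiv.ofBijective _ (phiVal_bij K b)

noncomputable def stairPerm (K b : ℕ) : Equiv.Perm (Fin ((2 * K + 1) * b)) :=
  (ePos K b).symm.trans (eVal K b)

lemma ePos_apply (K b : ℕ) (p) : ePos K b p = phiPos K b p := rfl

lemma stair_apply (K b : ℕ) (p) : stairPerm K b (ePos K b p) = phiVal K b p := by
  simp [stairPerm, ePos, eVal]

lemma ePos_lt_iff (K b : ℕ) (p q) :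
    ePos K b p < ePos K b q ↔ posN b p.1 p.2 < posN b q.1 q.2 := Iff.rfl


/-! ### Numeric comparison lemmas for the staircase clauses -/

lemma posN_t_mono (b i : ℕ) {t t' : ℕ} (h : t < t') : posN b i t < posN b i t' := by
  rcases block_cases i with rfl | ⟨c, rfl⟩ | ⟨c, rfl⟩
  · rw [posN_zero, posN_zero]; omega
  · rw [posN_odd, posN_odd]; exact Nat.add_lt_add_left (by omega) _
  · rw [posN_even, posN_even]; exact Nat.add_lt_add_left (by omega) _

lemma valN_t_mono (K b i : ℕ) {t t' : ℕ} (h : t < t') :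
    valN (2 * K + 1) b i t < valN (2 * K + 1) b i t' := by
  rcases block_cases2 i with ⟨c, rfl⟩ | ⟨c, rfl⟩
  · by_cases hc : 2 * c + 1 < 2 * K + 1
    · rw [valN_even _ _ _ _ hc, valN_even _ _ _ _ hc]
      exact Nat.add_lt_add_left (by omega) _
    · rw [valN_top _ _ _ _ hc, valN_top _ _ _ _ hc]
      exact Nat.add_lt_add_left h _
  · rw [valN_odd, valN_odd]; exact Nat.add_lt_add_left (by omega) _

lemma posN_sep (K b : ℕ) {i j s t : ℕ} (hij : i + 2 ≤ j) (hj : j < 2 * K + 1)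
    (hs : s < b) (ht : t < b) : posN b i s < posN b j t := by
  rcases block_cases i with rfl | ⟨c, rfl⟩ | ⟨c, rfl⟩ <;>
    rcases block_cases j with rfl | ⟨c', rfl⟩ | ⟨c', rfl⟩
  · omega
  · rw [posN_zero, posN_odd]; exact sepa (by omega) hs
  · rw [posN_zero, posN_even]; exact sepa (by omega) hs
  · omega
  · rw [posN_odd, posN_odd]; exact sepb (by omega) (by omega)
  · rw [posN_odd, posN_even]; exact sepb (by omega) (by omega)
  · omega
  · rw [posN_even, posN_odd]; exact sepb (by omega) (by omega)
  · rw [posN_even, posN_even]; exact sepb (by omega) (by omega)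

lemma valN_sep (K b : ℕ) {i j s t : ℕ} (hij : i + 2 ≤ j) (hj : j < 2 * K + 1)
    (hs : s < b) (ht : t < b) : valN (2 * K + 1) b i s < valN (2 * K + 1) b j t := by
  have expand : ∀ c u, u < 2 * b →
      (valN (2 * K + 1) b (2 * c) u = (2 * c) * b + (2 * u + 1) ∨
       valN (2 * K + 1) b (2 * c) u = (2 * c) * b + u) := by
    intro c u hu
    by_cases hc : 2 * c + 1 < 2 * K + 1
    · exact Or.inl (valN_even _ _ _ _ hc)
    · exact Or.inr (valN_top _ _ _ _ hc)
  rcases block_cases2 i with ⟨c, rfl⟩ | ⟨c, rfl⟩ <;>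
    rcases block_cases2 j with ⟨c', rfl⟩ | ⟨c', rfl⟩
  · rcases expand c s (by omega) with h1 | h1 <;> rcases expand c' t (by omega) with h2 | h2 <;>
      rw [h1, h2] <;> exact sepb (by omega) (by omega)
  · rcases expand c s (by omega) with h1 | h1 <;> rw [h1, valN_odd] <;>
      exact sepb (by omega) (by omega)
  · rcases expand c' t (by omega) with h2 | h2 <;> rw [valN_odd, h2] <;>
      exact sepb (by omega) (by omega)
  · rw [valN_odd, valN_odd]; exact sepb (by omega) (by omega)

/-! ### The staircase theorem -/

theorem isStaircase (K b : ℕ) :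
    IsGenericStaircase (2 * K + 1) b ⟨(2 * K + 1) * b, stairPerm K b⟩ := by
  refine ⟨fun i t => ePos K b (i, t), ?_, ?_, ?_, ?_, ?_, ?_⟩
  · exact (ePos K b).bijective
  · intro i t t' h
    show phiPos K b (i, t) < phiPos K b (i, t')
    exact posN_t_mono b i h
  · intro i t t' h
    show stairPerm K b (ePos K b (i, t)) < stairPerm K b (ePos K b (i, t'))
    rw [stair_apply, stair_apply]
    exact valN_t_mono K b i h
  · -- even i, j = i + 1
    intro i j hij hpar
    obtain ⟨c, hc⟩ : ∃ c, (i : ℕ) = 2 * c := ⟨(i : ℕ) / 2, by omega⟩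
    have hjv : (j : ℕ) = 2 * c + 1 := by omega
    have hjk : 2 * c + 1 < 2 * K + 1 := hjv ▸ j.2
    refine ⟨?_, ?_, ?_⟩
    · intro s t
      show phiPos K b (i, s) < phiPos K b (j, t)
      show posN b i s < posN b j t
      rw [hc, hjv, posN_odd]
      rcases Nat.eq_zero_or_pos c with rfl | hcpos
      · rw [show 2 * (0:ℕ) = 0 by ring, posN_zero]; exact sepa (by omega) s.2
      · rw [show 2 * c = 2 * (c - 1) + 2 by omega, posN_even]
        exact sepb (by omega) (by omega)
    · intro t
      show stairPerm K b (ePos K b (j, t)) < stairPerm K b (ePos K b (i, t))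
      rw [stair_apply, stair_apply]
      show valN _ b j t < valN _ b i t
      rw [hc, hjv, valN_odd, valN_even _ _ _ _ hjk]
      exact Nat.add_lt_add_left (by omega) _
    · intro s t hst
      show stairPerm K b (ePos K b (i, s)) < stairPerm K b (ePos K b (j, t))
      rw [stair_apply, stair_apply]
      show valN _ b i s < valN _ b j t
      rw [hc, hjv, valN_odd, valN_even _ _ _ _ hjk]
      exact Nat.add_lt_add_left (by omega) _
  · -- odd i, j = i + 1
    intro i j hij hpar
    obtain ⟨c, hc⟩ : ∃ c, (i : ℕ) = 2 * c + 1 := ⟨(i : ℕ) / 2, by omega⟩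
    have hjv : (j : ℕ) = 2 * c + 2 := by omega
    refine ⟨?_, ?_, ?_⟩
    · intro s t
      show stairPerm K b (ePos K b (i, s)) < stairPerm K b (ePos K b (j, t))
      rw [stair_apply, stair_apply]
      show valN _ b i s < valN _ b j t
      rw [hc, valN_odd, hjv]
      by_cases hck : 2 * (c + 1) + 1 < 2 * K + 1
      · rw [show 2 * c + 2 = 2 * (c + 1) by ring, valN_even _ _ _ _ hck]
        exact sepb (by omega) (by omega)
      · rw [show 2 * c + 2 = 2 * (c + 1) by ring, valN_top _ _ _ _ hck]
        exact sepb (by omega) (by omega)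
    · intro t
      show phiPos K b (i, t) < phiPos K b (j, t)
      show posN b i t < posN b j t
      rw [hc, hjv, posN_odd, posN_even]
      exact Nat.add_lt_add_left (by omega) _
    · intro s t hst
      show phiPos K b (j, t) < phiPos K b (i, s)
      show posN b j t < posN b i s
      rw [hc, hjv, posN_odd, posN_even]
      exact Nat.add_lt_add_left (by omega) _
  · -- distance ≥ 2
    intro i j hij s t
    constructor
    · show phiPos K b (i, s) < phiPos K b (j, t)
      exact posN_sep K b hij j.2 s.2 t.2
    · show stairPerm K b (ePos K b (i, s)) < stairPerm K b (ePos K b (j, t))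
      rw [stair_apply, stair_apply]
      exact valN_sep K b hij j.2 s.2 t.2

/-! ### The two-lines drawing of a 321-avoiding permutation -/

section Embed

variable {n : ℕ} (π : Equiv.Perm (Fin n))

/-- `z` is the earlier element of some inversion. -/
def Az (z : Fin n) : Prop := ∃ r, z < r ∧ π r < π z

instance : DecidablePred (Az π) := fun _ => Fintype.decidableExistsFintype

/-- one step of the greedy construction of heights. -/
def LG (v : ℕ) (hv : v < n) (G : ℕ → ℚ) : ℚ :=
  (Finset.univ.filter fun z : Fin n => (π z : ℕ) < v).fold max 0
    (fun z => G (π z) + if ¬ Az π z ∧ z < π.symm ⟨v, hv⟩ ∧ Az π (π.symm ⟨v, hv⟩) then 1 else 0)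

def RG (v : ℕ) (hv : v < n) (G : ℕ → ℚ) : ℚ :=
  (Finset.univ.filter fun y : Fin n =>
      (π y : ℕ) < v ∧ ¬ Az π y ∧ ¬ ∃ x, Az π x ∧ y < x ∧ (π x : ℕ) ≤ v).fold min
    (LG π v hv G + 1) (fun y => G (π y) + 1)

def stepF (v : ℕ) (G : ℕ → ℚ) : ℚ :=
  if hv : v < n then (LG π v hv G + RG π v hv G) / 2 else 0

def Fit : ℕ → ℕ → ℚ
  | 0 => fun _ => 0
  | v + 1 => fun u => if u = v then stepF π v (Fit v) else Fit v u

/-- the height of the point with value `v`. -/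
def gq (v : ℕ) : ℚ := Fit π (v + 1) v

lemma Fit_eq : ∀ w u, u < w → Fit π w u = gq π u := by
  intro w
  induction w with
  | zero => omega
  | succ w ih =>
    intro u hu
    rcases Nat.lt_or_ge u w with h | h
    · have : Fit π (w + 1) u = Fit π w u := by simp [Fit, Nat.ne_of_lt h]
      rw [this, ih u h]
    · have huw : u = w := by omega
      subst huw; rfl

lemma LG_eq (v : ℕ) (hv : v < n) : LG π v hv (Fit π v) = LG π v hv (gq π) := by
  unfold LG
  refine Finset.fold_congr fun z hz => ?_
  rw [Fit_eq π v (π z) (Finset.mem_filter.mp hz).2]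

lemma RG_eq (v : ℕ) (hv : v < n) : RG π v hv (Fit π v) = RG π v hv (gq π) := by
  unfold RG
  rw [LG_eq]
  refine Finset.fold_congr fun y hy => ?_
  rw [Fit_eq π v (π y) (Finset.mem_filter.mp hy).2.1]

lemma gq_eq (v : ℕ) (hv : v < n) :
    gq π v = (LG π v hv (gq π) + RG π v hv (gq π)) / 2 := by
  have h1 : gq π v = stepF π v (Fit π v) := by simp [gq, Fit]
  rw [h1, stepF, dif_pos hv, LG_eq, RG_eq]

lemma lt_of_B {z z' : Fin n} (h : z < z') (hz : ¬ Az π z) : π z < π z' := by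
  rcases lt_trichotomy (π z) (π z') with h1 | h1 | h1
  · exact h1
  · exact absurd (π.injective h1) (ne_of_lt h)
  · exact absurd ⟨z', h, h1⟩ hz

lemma lt_of_A (H : ∀ p q r : Fin n, p < q → q < r → π q < π p → π r < π q → False)
    {z z' : Fin n} (h : z < z') (hz' : Az π z') : π z < π z' := by
  rcases lt_trichotomy (π z) (π z') with h1 | h1 | h1
  · exact h1
  · exact absurd (π.injective h1) (ne_of_lt h)
  · obtain ⟨r, hr1, hr2⟩ := hz'
    exact absurd (H z z' r h hr1 h1 hr2) id

lemma pack (H : ∀ p q r : Fin n, p < q → q < r → π q < π p → π r < π q → False) :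
    ∀ v, v ≤ n →
    (∀ z z' : Fin n, (π z' : ℕ) < v → π z < π z' → gq π (π z) < gq π (π z')) ∧
    (∀ z : Fin n, (π z : ℕ) < v → 0 < gq π (π z)) ∧
    (∀ x y : Fin n, (π x : ℕ) < v → (π y : ℕ) < v → Az π x → ¬ Az π y →
      (x < y → gq π (π x) < gq π (π y) + 1) ∧ (y < x → gq π (π y) + 1 < gq π (π x))) ∧
    (∀ z y : Fin n, (π z : ℕ) < v → (π y : ℕ) < v → ¬ Az π y →
      (¬ ∃ x, Az π x ∧ y < x ∧ (π x : ℕ) ≤ (π z : ℕ)) → gq π (π z) < gq π (π y) + 1) := by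
  intro v
  induction v with
  | zero => exact fun _ => ⟨fun z z' h => by omega, fun z h => by omega,
      fun x y h => by omega, fun z y h => by omega⟩
  | succ v ih =>
    intro hv1
    have hv : v < n := by omega
    obtain ⟨IHmono, IHpos, IHP2, IHI⟩ := ih (by omega)
    set m : Fin n := π.symm ⟨v, hv⟩ with hm_def
    have hm : (π m : ℕ) = v := by simp [hm_def]
    have eqm : ∀ z : Fin n, (π z : ℕ) = v → z = m := by
      intro z hz
      have : π z = ⟨v, hv⟩ := Fin.ext hz
      rw [hm_def, ← this]; simp
    -- no point of smaller value after `m` is the earlier element of an inversion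
    have F8 : ∀ x : Fin n, Az π x → m < x → (π x : ℕ) < v → False := by
      intro x hx hmx hxv
      obtain ⟨r, hr1, hr2⟩ := hx
      exact H m x r hmx hr1 (by rw [Fin.lt_def, hm]; omega) hr2
    -- generic membership facts
    have F1 : ∀ z : Fin n, (π z : ℕ) < v →
        gq π (π z) + (if ¬ Az π z ∧ z < m ∧ Az π m then (1:ℚ) else 0) ≤ LG π v hv (gq π) := by
      intro z hz
      exact (Finset.le_fold_max _).mpr (Or.inr ⟨z, Finset.mem_filter.mpr ⟨Finset.mem_univ z, hz⟩, le_refl _⟩)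
    have F2 : (0:ℚ) ≤ LG π v hv (gq π) := (Finset.le_fold_max _).mpr (Or.inl le_rfl)
    have F5 : ∀ z : Fin n, (π z : ℕ) < v → gq π (π z) ≤ LG π v hv (gq π) := by
      intro z hz
      have := F1 z hz
      split_ifs at this <;> linarith
    -- the key gap
    have F3 : LG π v hv (gq π) < RG π v hv (gq π) := by
      unfold RG
      refine (Finset.lt_fold_min _).mpr ⟨by linarith, ?_⟩
      intro y hy
      obtain ⟨hy1, hy2, hy3⟩ := (Finset.mem_filter.mp hy).2
      refine (Finset.fold_max_lt _).mpr ⟨by have := IHpos y hy1; linarith, ?_⟩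
      intro z hz
      have hz1 : (π z : ℕ) < v := (Finset.mem_filter.mp hz).2
      by_cases hχ : ¬ Az π z ∧ z < m ∧ Az π m
      · rw [if_pos hχ]
        have hmy : m < y := by
          rcases lt_trichotomy m y with h1 | h1 | h1
          · exact h1
          · exact absurd (h1 ▸ hm) (by omega)
          · exact absurd ⟨m, hχ.2.2, h1, by omega⟩ hy3
        have hzy : π z < π y := lt_of_B π (lt_trans hχ.2.1 hmy) hχ.1
        have := IHmono z y hy1 hzy
        linarith
      · rw [if_neg hχ]
        have : gq π (π z) < gq π (π y) + 1 := by
          refine IHI z y hz1 hy1 hy2 ?_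
          rintro ⟨x, hx1, hx2, hx3⟩
          exact hy3 ⟨x, hx1, hx2, by omega⟩
        linarith
    have gv_eq := gq_eq π v hv
    have hmv : gq π (π m) = (LG π v hv (gq π) + RG π v hv (gq π)) / 2 := by
      rw [show π m = ⟨v, hv⟩ by simp [hm_def]]; exact gv_eq
    have F4a : LG π v hv (gq π) < gq π (π m) := by rw [hmv]; linarith
    have F4b : gq π (π m) < RG π v hv (gq π) := by rw [hmv]; linarith
    have F5' : ∀ z : Fin n, (π z : ℕ) < v → gq π (π z) < gq π (π m) := by
      intro z hz; exact lt_of_le_of_lt (F5 z hz) F4a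
    have F6 : ∀ y : Fin n, (π y : ℕ) < v → ¬ Az π y →
        (¬ ∃ x, Az π x ∧ y < x ∧ (π x : ℕ) ≤ v) → gq π (π m) < gq π (π y) + 1 := by
      intro y hy1 hy2 hy3
      have hmem : y ∈ Finset.univ.filter fun y : Fin n =>
          (π y : ℕ) < v ∧ ¬ Az π y ∧ ¬ ∃ x, Az π x ∧ y < x ∧ (π x : ℕ) ≤ v :=
        Finset.mem_filter.mpr ⟨Finset.mem_univ y, hy1, hy2, hy3⟩
      have : RG π v hv (gq π) ≤ gq π (π y) + 1 :=
        (Finset.fold_min_le _).mpr (Or.inr ⟨y, hmem, le_rfl⟩)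
      linarith
    have F7 : ∀ y : Fin n, (π y : ℕ) < v → ¬ Az π y → y < m → Az π m →
        gq π (π y) + 1 < gq π (π m) := by
      intro y hy1 hy2 hy3 hy4
      have := F1 y hy1
      rw [if_pos ⟨hy2, hy3, hy4⟩] at this
      linarith
    -- dichotomy on values below v+1
    have dich : ∀ z : Fin n, (π z : ℕ) < v + 1 → (π z : ℕ) < v ∨ z = m := by
      intro z hz
      rcases Nat.lt_or_ge (π z : ℕ) v with h | h
      · exact Or.inl h
      · exact Or.inr (eqm z (by omega))
    refine ⟨?_, ?_, ?_, ?_⟩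
    · -- mono
      intro z z' hz' hlt
      rcases dich z' hz' with h | rfl
      · exact IHmono z z' h hlt
      · refine F5' z ?_
        have := Fin.lt_def.mp hlt; omega
    · -- pos
      intro z hz
      rcases dich z hz with h | rfl
      · exact IHpos z h
      · linarith
    · -- P2
      intro x y hx hy hAx hBy
      have hxy_ne : x ≠ y := fun h => hBy (h ▸ hAx)
      rcases dich x hx with hx1 | hxm <;> rcases dich y hy with hy1 | hym
      · exact IHP2 x y hx1 hy1 hAx hBy
      · -- y = m, x has smaller value
        subst hym
        constructor
        · intro hxy
          have := F5' x hx1; linarith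
        · intro hyx
          exact absurd (F8 x hAx hyx hx1) id
      · -- x = m
        subst hxm
        constructor
        · intro hxy
          refine F6 y hy1 hBy ?_
          rintro ⟨x', h1, h2, h3⟩
          rcases Nat.lt_or_ge (π x' : ℕ) v with h4 | h4
          · exact F8 x' h1 (lt_trans hxy h2) h4
          · have hx'm : x' = m := eqm x' (by omega)
            subst hx'm
            exact absurd (lt_trans hxy h2) (lt_irrefl _)
        · intro hyx
          exact F7 y hy1 hBy hyx hAx
      · exact absurd (hxm.trans hym.symm) hxy_ne
    · -- invariant I
      intro z y hz hy hBy hcond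
      rcases dich y hy with hy1 | rfl
      · rcases dich z hz with hz1 | rfl
        · refine IHI z y hz1 hy1 hBy ?_
          rintro ⟨x, h1, h2, h3⟩
          exact hcond ⟨x, h1, h2, h3⟩
        · refine F6 y hy1 hBy ?_
          rintro ⟨x, h1, h2, h3⟩
          exact hcond ⟨x, h1, h2, by omega⟩
      · -- y = m
        rcases dich z hz with hz1 | rfl
        · have := F5' z hz1; linarith
        · linarith

end Embed

/-! ### Block-comparison lemmas -/

lemma posAA {b l l' t t' : ℕ} (ht : t < b) (h : l < l' ∨ (l = l' ∧ t < t')) :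
    posN b (2 * l) t < posN b (2 * l') t' := by
  rcases h with h | ⟨rfl, h⟩
  · rcases Nat.eq_zero_or_pos l with rfl | hl
    · rw [show 2 * 0 = 0 by ring, posN_zero, show 2 * l' = 2 * (l' - 1) + 2 by omega, posN_even]
      exact sepa (by omega) ht
    · rw [show 2 * l = 2 * (l - 1) + 2 by omega, posN_even,
        show 2 * l' = 2 * (l' - 1) + 2 by omega, posN_even]
      exact sepb (by omega) (by omega)
  · rcases Nat.eq_zero_or_pos l with rfl | hl
    · rw [show 2 * 0 = 0 by ring, posN_zero, posN_zero]; omega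
    · rw [show 2 * l = 2 * (l - 1) + 2 by omega, posN_even, posN_even]
      exact Nat.add_lt_add_left (by omega) _

lemma posBB {b l l' t t' : ℕ} (ht : t < b) (h : l < l' ∨ (l = l' ∧ t < t')) :
    posN b (2 * l + 1) t < posN b (2 * l' + 1) t' := by
  rcases h with h | ⟨rfl, h⟩
  · rw [posN_odd, posN_odd]; exact sepb (by omega) (by omega)
  · rw [posN_odd, posN_odd]; exact Nat.add_lt_add_left (by omega) _

lemma posAB {b l l' t t' : ℕ} (ht : t < b) (h : l ≤ l' ∨ (l = l' + 1 ∧ t < t')) :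
    posN b (2 * l) t < posN b (2 * l' + 1) t' := by
  rcases h with h | ⟨rfl, h⟩
  · rcases Nat.eq_zero_or_pos l with rfl | hl
    · rw [show 2 * 0 = 0 by ring, posN_zero, posN_odd]
      exact sepa (by omega) ht
    · rw [show 2 * l = 2 * (l - 1) + 2 by omega, posN_even, posN_odd]
      exact sepb (by omega) (by omega)
  · rw [show 2 * (l' + 1) = 2 * l' + 2 by ring, posN_even, posN_odd]
    exact Nat.add_lt_add_left (by omega) _

lemma posBA {b l l' t t' : ℕ} (ht : t < b) (h : l + 1 < l' ∨ (l' = l + 1 ∧ t ≤ t')) :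
    posN b (2 * l + 1) t < posN b (2 * l') t' := by
  rcases h with h | ⟨rfl, h⟩
  · rw [posN_odd, show 2 * l' = 2 * (l' - 1) + 2 by omega, posN_even]
    exact sepb (by omega) (by omega)
  · rw [posN_odd, show 2 * (l + 1) = 2 * l + 2 by ring, posN_even]
    exact Nat.add_lt_add_left (by omega) _

lemma valAA {K b l l' t t' : ℕ} (hl : l < K) (hl' : l' < K) (ht : t < b)
    (h : l < l' ∨ (l = l' ∧ t < t')) :
    valN (2 * K + 1) b (2 * l) t < valN (2 * K + 1) b (2 * l') t' := by
  rw [valN_even _ _ _ _ (by omega), valN_even _ _ _ _ (by omega)]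
  rcases h with h | ⟨rfl, h⟩
  · exact sepb (by omega) (by omega)
  · exact Nat.add_lt_add_left (by omega) _

lemma valBB {K b l l' t t' : ℕ} (ht : t < b) (h : l < l' ∨ (l = l' ∧ t < t')) :
    valN (2 * K + 1) b (2 * l + 1) t < valN (2 * K + 1) b (2 * l' + 1) t' := by
  rw [valN_odd, valN_odd]
  rcases h with h | ⟨rfl, h⟩
  · exact sepb (by omega) (by omega)
  · exact Nat.add_lt_add_left (by omega) _

lemma valAB {K b l l' t t' : ℕ} (hl : l < K) (ht : t < b) (h : l < l' ∨ (l = l' ∧ t < t')) :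
    valN (2 * K + 1) b (2 * l) t < valN (2 * K + 1) b (2 * l' + 1) t' := by
  rw [valN_even _ _ _ _ (by omega), valN_odd]
  rcases h with h | ⟨rfl, h⟩
  · exact sepb (by omega) (by omega)
  · exact Nat.add_lt_add_left (by omega) _

lemma valBA {K b l l' t t' : ℕ} (hl' : l' < K) (ht : t < b) (h : l < l' ∨ (l = l' ∧ t ≤ t')) :
    valN (2 * K + 1) b (2 * l + 1) t < valN (2 * K + 1) b (2 * l') t' := by
  rw [valN_odd, valN_even _ _ _ _ (by omega)]
  rcases h with h | ⟨rfl, h⟩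
  · exact sepb (by omega) (by omega)
  · exact Nat.add_lt_add_left (by omega) _

/-! ### Assembly -/

section Assemble

variable {n : ℕ} (π : Equiv.Perm (Fin n))

noncomputable def wq (z : Fin n) : ℚ := gq π (π z)

noncomputable def lam (z : Fin n) : ℕ := (⌊wq π z⌋).toNat

noncomputable def uq (z : Fin n) : ℚ := wq π z - (lam π z : ℚ)

noncomputable def ttn (z : Fin n) : ℕ :=
  (Finset.univ.filter fun z' : Fin n => uq π z' < uq π z ∨ (uq π z' = uq π z ∧ z' < z)).card

lemma ttn_mono {z z' : Fin n} (h : uq π z < uq π z') : ttn π z < ttn π z' := by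
  apply Finset.card_lt_card
  rw [Finset.ssubset_def]
  constructor
  · intro a ha
    rw [Finset.mem_filter] at ha ⊢
    refine ⟨ha.1, Or.inl ?_⟩
    rcases ha.2 with h1 | ⟨h1, h2⟩
    · exact lt_trans h1 h
    · rw [h1]; exact h
  · intro hsub
    have hz : z ∈ Finset.univ.filter fun a : Fin n =>
        uq π a < uq π z' ∨ (uq π a = uq π z' ∧ a < z') :=
      Finset.mem_filter.mpr ⟨Finset.mem_univ z, Or.inl h⟩
    have := Finset.mem_filter.mp (hsub hz)
    rcases this.2 with h1 | ⟨h1, h2⟩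
    · exact absurd h1 (lt_irrefl _)
    · exact absurd h2 (lt_irrefl _)

variable (H : ∀ p q r : Fin n, p < q → q < r → π q < π p → π r < π q → False)

lemma wq_pos (z : Fin n) (H : ∀ p q r : Fin n, p < q → q < r → π q < π p → π r < π q → False) :
    0 < wq π z :=
  (pack π H n le_rfl).2.1 z (π z).2

lemma lam_cast (z : Fin n)
    (H : ∀ p q r : Fin n, p < q → q < r → π q < π p → π r < π q → False) :
    ((lam π z : ℕ) : ℚ) = (⌊wq π z⌋ : ℚ) := by
  have h0 : (0:ℤ) ≤ ⌊wq π z⌋ := Int.floor_nonneg.mpr (le_of_lt (wq_pos π z H))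
  unfold lam
  exact_mod_cast congrArg (fun i : ℤ => (i : ℚ)) (Int.toNat_of_nonneg h0)

lemma keyc (z z' : Fin n) (c : ℕ)
    (H : ∀ p q r : Fin n, p < q → q < r → π q < π p → π r < π q → False)
    (h : wq π z < wq π z' + c) :
    lam π z ≤ lam π z' + c ∧ (lam π z = lam π z' + c → uq π z < uq π z') := by
  have h0 : (0:ℤ) ≤ ⌊wq π z⌋ := Int.floor_nonneg.mpr (le_of_lt (wq_pos π z H))
  have h0' : (0:ℤ) ≤ ⌊wq π z'⌋ := Int.floor_nonneg.mpr (le_of_lt (wq_pos π z' H))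
  have hf : ⌊wq π z⌋ ≤ ⌊wq π z'⌋ + c := by
    have := Int.floor_le_floor (le_of_lt h)
    rwa [Int.floor_add_natCast] at this
  constructor
  · show (⌊wq π z⌋).toNat ≤ (⌊wq π z'⌋).toNat + c
    omega
  · intro he
    have he' : (⌊wq π z⌋).toNat = (⌊wq π z'⌋).toNat + c := he
    have heZ : ⌊wq π z⌋ = ⌊wq π z'⌋ + c := by omega
    have heQ : (⌊wq π z⌋ : ℚ) = (⌊wq π z'⌋ : ℚ) + c := by exact_mod_cast heZ
    unfold uq
    rw [lam_cast π z H, lam_cast π z' H]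
    linarith

lemma keyd (z z' : Fin n)
    (H : ∀ p q r : Fin n, p < q → q < r → π q < π p → π r < π q → False)
    (h : wq π z + 1 < wq π z') :
    lam π z + 1 ≤ lam π z' ∧ (lam π z' = lam π z + 1 → uq π z < uq π z') := by
  have h0 : (0:ℤ) ≤ ⌊wq π z⌋ := Int.floor_nonneg.mpr (le_of_lt (wq_pos π z H))
  have h0' : (0:ℤ) ≤ ⌊wq π z'⌋ := Int.floor_nonneg.mpr (le_of_lt (wq_pos π z' H))
  have hf : ⌊wq π z⌋ + 1 ≤ ⌊wq π z'⌋ := by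
    have h1 : ⌊wq π z + 1⌋ ≤ ⌊wq π z'⌋ := Int.floor_le_floor (le_of_lt h)
    rwa [Int.floor_add_one] at h1
  constructor
  · show (⌊wq π z⌋).toNat + 1 ≤ (⌊wq π z'⌋).toNat
    omega
  · intro he
    have he' : (⌊wq π z'⌋).toNat = (⌊wq π z⌋).toNat + 1 := he
    have heZ : ⌊wq π z'⌋ = ⌊wq π z⌋ + 1 := by omega
    have heQ : (⌊wq π z'⌋ : ℚ) = (⌊wq π z⌋ : ℚ) + 1 := by exact_mod_cast heZ
    unfold uq
    rw [lam_cast π z H, lam_cast π z' H]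
    linarith

end Assemble


theorem main_embed {n : ℕ} (π : Equiv.Perm (Fin n))
    (H : ∀ p q r : Fin n, p < q → q < r → π q < π p → π r < π q → False) :
    ∃ k b : ℕ, 0 < k ∧ 0 < b ∧ ∃ σ : PermSig, IsGenericStaircase k b σ ∧
      ∃ f : Fin n → Fin σ.1, IsEmbedding π σ.2 f := by
  classical
  set K := Finset.univ.sup (lam π) + 1 with hK
  set b := n + 1 with hbdef
  have hlam : ∀ z : Fin n, lam π z < K := fun z => by
    have := Finset.le_sup (f := lam π) (Finset.mem_univ z); omega
  have htb : ∀ z : Fin n, ttn π z < b := fun z => by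
    have h1 : ttn π z ≤ (Finset.univ : Finset (Fin n)).card := Finset.card_filter_le _ _
    rw [Finset.card_univ, Fintype.card_fin] at h1
    omega
  have hblk : ∀ z : Fin n, (if Az π z then 2 * lam π z else 2 * lam π z + 1) < 2 * K + 1 :=
    fun z => by have := hlam z; split_ifs <;> omega
  -- convenient facts
  have Pm : ∀ z z' : Fin n, π z < π z' → wq π z < wq π z' :=
    fun z z' h => (pack π H n le_rfl).1 z z' (π z').2 h
  have P2 := fun (x y : Fin n) (hx : Az π x) (hy : ¬ Az π y) =>
    (pack π H n le_rfl).2.2.1 x y (π x).2 (π y).2 hx hy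
  have key0 : ∀ z z' : Fin n, wq π z < wq π z' →
      lam π z ≤ lam π z' ∧ (lam π z = lam π z' → uq π z < uq π z') := by
    intro z z' h
    have := keyc π z z' 0 H (by push_cast; linarith)
    simpa using this
  have key1 : ∀ z z' : Fin n, wq π z < wq π z' + 1 →
      lam π z ≤ lam π z' + 1 ∧ (lam π z = lam π z' + 1 → uq π z < uq π z') := by
    intro z z' h
    have := keyc π z z' 1 H (by push_cast; linarith)
    simpa using this
  refine ⟨2 * K + 1, b, by omega, by omega, ⟨(2 * K + 1) * b, stairPerm K b⟩,
    isStaircase K b, ?_⟩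
  refine ⟨fun z => ePos K b
    (⟨if Az π z then 2 * lam π z else 2 * lam π z + 1, hblk z⟩, ⟨ttn π z, htb z⟩), ?_, ?_⟩
  · -- strict monotone in position
    intro z z' hzz
    show posN b (if Az π z then 2 * lam π z else 2 * lam π z + 1) (ttn π z) <
      posN b (if Az π z' then 2 * lam π z' else 2 * lam π z' + 1) (ttn π z')
    by_cases hA : Az π z <;> by_cases hA' : Az π z'
    · rw [if_pos hA, if_pos hA']
      have k0 := key0 z z' (Pm z z' (lt_of_A π H hzz hA'))
      rcases lt_or_eq_of_le k0.1 with h | h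
      · exact posAA (htb z) (Or.inl h)
      · exact posAA (htb z) (Or.inr ⟨h, ttn_mono π (k0.2 h)⟩)
    · rw [if_pos hA, if_neg hA']
      have k1 := key1 z z' ((P2 z z' hA hA').1 hzz)
      rcases lt_or_eq_of_le k1.1 with h | h
      · exact posAB (htb z) (Or.inl (by omega))
      · exact posAB (htb z) (Or.inr ⟨h, ttn_mono π (k1.2 h)⟩)
    · rw [if_neg hA, if_pos hA']
      have kd := keyd π z z' H ((P2 z' z hA' hA).2 hzz)
      rcases lt_or_eq_of_le kd.1 with h | h
      · exact posBA (htb z) (Or.inl h)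
      · exact posBA (htb z) (Or.inr ⟨h.symm, le_of_lt (ttn_mono π (kd.2 h.symm))⟩)
    · rw [if_neg hA, if_neg hA']
      have k0 := key0 z z' (Pm z z' (lt_of_B π hzz hA))
      rcases lt_or_eq_of_le k0.1 with h | h
      · exact posBB (htb z) (Or.inl h)
      · exact posBB (htb z) (Or.inr ⟨h, ttn_mono π (k0.2 h)⟩)
  · -- value order
    have hval : ∀ z z' : Fin n, π z < π z' →
        stairPerm K b (ePos K b
          (⟨if Az π z then 2 * lam π z else 2 * lam π z + 1, hblk z⟩, ⟨ttn π z, htb z⟩)) <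
        stairPerm K b (ePos K b
          (⟨if Az π z' then 2 * lam π z' else 2 * lam π z' + 1, hblk z'⟩,
            ⟨ttn π z', htb z'⟩)) := by
      intro z z' hv
      rw [stair_apply, stair_apply]
      show valN (2 * K + 1) b (if Az π z then 2 * lam π z else 2 * lam π z + 1) (ttn π z) <
        valN (2 * K + 1) b (if Az π z' then 2 * lam π z' else 2 * lam π z' + 1) (ttn π z')
      have k0 := key0 z z' (Pm z z' hv)
      have hd : lam π z < lam π z' ∨ (lam π z = lam π z' ∧ ttn π z < ttn π z') := by
        rcases lt_or_eq_of_le k0.1 with h | h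
        · exact Or.inl h
        · exact Or.inr ⟨h, ttn_mono π (k0.2 h)⟩
      by_cases hA : Az π z <;> by_cases hA' : Az π z'
      · rw [if_pos hA, if_pos hA']
        exact valAA (hlam z) (hlam z') (htb z) hd
      · rw [if_pos hA, if_neg hA']
        exact valAB (hlam z) (htb z) hd
      · rw [if_neg hA, if_pos hA']
        refine valBA (hlam z') (htb z) ?_
        rcases hd with h | ⟨h1, h2⟩
        · exact Or.inl h
        · exact Or.inr ⟨h1, le_of_lt h2⟩
      · rw [if_neg hA, if_neg hA']
        exact valBB (htb z) hd
    intro a c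
    constructor
    · exact hval a c
    · intro h
      rcases lt_trichotomy (π a) (π c) with h1 | h1 | h1
      · exact h1
      · have : a = c := π.injective h1
        subst this
        exact absurd h (lt_irrefl _)
      · exact absurd (lt_trans h (hval c a h1)) (lt_irrefl _)

/-- Every permutation in `I₂` occurs as a pattern in some generic staircase. -/
theorem embeds_in_generic_staircase (π : PermSig) (hπ : π ∈ IkClass 2) :
    ∃ k b : ℕ, 0 < k ∧ 0 < b ∧
      ∃ σ : PermSig, IsGenericStaircase k b σ ∧ Involves π σ := by
  obtain ⟨n, p⟩ := π
  have H : ∀ a q r : Fin n, a < q → q < r → p q < p a → p r < p q → False := by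
    intro a q r h1 h2 h3 h4
    apply hπ
    have h5 : a < r := lt_trans h1 h2
    have h6 : p r < p a := lt_trans h4 h3
    refine ⟨![a, q, r], ?_, ?_⟩
    · intro i j hij
      fin_cases i <;> fin_cases j <;> simp_all <;> omega
    · intro i j hij
      fin_cases i <;> fin_cases j <;> simp_all <;> omega
  obtain ⟨k, b, hk, hb, σ, hσ, f, hf⟩ := main_embed p H
  exact ⟨k, b, hk, hb, σ, hσ, f, hf⟩
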